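/- arXiv:2412.09552 — 2 statements merged into one kernel-verified Lean document; each statement's English description precedes it below -/
import Mathlib

section
/- Let ▷ be a symmetric left partial action of a Hopf algebra H on a generalized matrix algebra R = (iMj) such that each ι_ij(iMj) is H-invariant. Then for each pair (i,j), the map π_ij : H → End(iMj) defined by π_ij(h)(m) = ι_ij⁻¹(h ▷ ι_ij(m)) is a partial representation of H. -/
open TensorProduct

section GMD

variable {k : Type*} [Field k] {n : ℕ}
variable (M : Fin n → Fin n → Type*) [∀ i j, AddCommGroup (M i j)] [∀ i j, Module k (M i j)]
variable (θ : ∀ i j l : Fin n, M i j →ₗ[k] M j l →ₗ[k] M i l)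
variable (e : ∀ i, M i i)

/-- A generalized matrix datum: the bilinear products `θ i j l` are associative and
the elements `e i = η_i(1)` are units. -/
structure IsGMDatum : Prop where
  assoc : ∀ (i j l m : Fin n) (x : M i j) (y : M j l) (z : M l m),
    θ i l m (θ i j l x y) z = θ i j m x (θ j l m y z)
  one_mul : ∀ (i j : Fin n) (x : M i j), θ i i j (e i) x = x
  mul_one : ∀ (i j : Fin n) (x : M i j), θ i j j x (e j) = x

/-- The underlying space of the generalized matrix algebra `R = ⊕_{i,j} M i j`. -/
abbrev gmaSpace := ∀ p : Fin n × Fin n, M p.1 p.2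

/-- Row-column multiplication on the generalized matrix algebra. -/
def gmaMul (x y : gmaSpace M) : gmaSpace M :=
  fun p => ∑ l, θ p.1 l p.2 (x (p.1, l)) (y (l, p.2))

/-- The unit `Σ_i ι_ii (e i)` of the generalized matrix algebra. -/
noncomputable def gmaOne : gmaSpace M :=
  ∑ i, Pi.single (M := fun p : Fin n × Fin n => M p.1 p.2) (i, i) (e i)

end GMD
/-- Sweedler-style sum `h ↦ Σ f(h₍₁₎) * g(h₍₂₎)` with respect to a bilinear
multiplication `mul`. -/
noncomputable def sweedler {k H B : Type*} [CommRing k] [Ring H] [HopfAlgebra k H]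
    [AddCommGroup B] [Module k B]
    (mul : B →ₗ[k] B →ₗ[k] B) (f g : H →ₗ[k] B) : H →ₗ[k] B :=
  TensorProduct.lift ((mul ∘ₗ f).compl₂ g) ∘ₗ Coalgebra.comul

/-- A symmetric left partial action of a Hopf algebra `H` on a (not necessarily
unital-typeclass) algebra `(A, mulA, oneA)`: (LPA1) `1_H·a = a`;
(LPA2) `h·(ab) = (h₍₁₎·a)(h₍₂₎·b)`;
(LPA3) `h·(g·a) = (h₍₁₎·1)(h₍₂₎g·a) = (h₍₁₎g·a)(h₍₂₎·1)`. -/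
structure IsLeftPartialActionOn (k : Type*) {H A : Type*} [CommRing k] [Ring H]
    [HopfAlgebra k H] [AddCommGroup A] [Module k A]
    (mulA : A →ₗ[k] A →ₗ[k] A) (oneA : A) (act : H →ₗ[k] A →ₗ[k] A) : Prop where
  lpa1 : ∀ a : A, act 1 a = a
  lpa2 : ∀ (h : H) (a b : A),
    act h (mulA a b) = sweedler mulA (act.flip a) (act.flip b) h
  lpa3 : ∀ (h g : H) (a : A),
    act h (act g a) =
      sweedler mulA (act.flip oneA) ((act.flip a) ∘ₗ LinearMap.mulRight k g) h
  lpa3' : ∀ (h g : H) (a : A),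
    act h (act g a) =
      sweedler mulA ((act.flip a) ∘ₗ LinearMap.mulRight k g) (act.flip oneA) h

section GMA

variable {k : Type*} [Field k] {n : ℕ}
variable (M : Fin n → Fin n → Type*) [∀ i j, AddCommGroup (M i j)] [∀ i j, Module k (M i j)]
variable (θ : ∀ i j l : Fin n, M i j →ₗ[k] M j l →ₗ[k] M i l)

/-- The multiplication of the generalized matrix algebra, as a bilinear map. -/
noncomputable def gmaMulL : gmaSpace M →ₗ[k] gmaSpace M →ₗ[k] gmaSpace M :=
  LinearMap.mk₂ k (gmaMul M θ)
    (fun x x' y => by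
      funext p; simp [gmaMul, map_add, LinearMap.add_apply, Finset.sum_add_distrib])
    (fun c x y => by
      funext p; simp [gmaMul, Finset.smul_sum])
    (fun x y y' => by
      funext p; simp [gmaMul, map_add, LinearMap.add_apply, Finset.sum_add_distrib])
    (fun c x y => by
      funext p; simp [gmaMul, Finset.smul_sum])

/-- The canonical inclusion `ι_ij : M i j → R` of a component into the generalized
matrix algebra. -/
noncomputable def gmaIncl (i j : Fin n) : M i j →ₗ[k] gmaSpace M :=
  LinearMap.single k (fun p : Fin n × Fin n => M p.1 p.2) (i, j)

variable {H : Type*} [Ring H] [HopfAlgebra k H]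

/-- The restriction `π_ij(h)(m) = ι_ij⁻¹(h ▷ ι_ij(m))` of a partial action on the
generalized matrix algebra to the component `M i j`. -/
noncomputable def actRestrict (act : H →ₗ[k] gmaSpace M →ₗ[k] gmaSpace M)
    (i j : Fin n) : H →ₗ[k] M i j →ₗ[k] M i j where
  toFun h := (LinearMap.proj (i, j)) ∘ₗ (act h) ∘ₗ (gmaIncl M i j)
  map_add' h h' := by ext m; simp
  map_smul' c h := by ext m; simp

end GMA

/-- A partial representation of a Hopf algebra `H` in a unital algebra `B`:
(PR1) `π(1) = 1`; (PR2) `π(h)π(k₍₁₎)π(S(k₍₂₎)) = π(hk₍₁₎)π(S(k₍₂₎))`;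
(PR3) `π(h₍₁₎)π(S(h₍₂₎))π(g) = π(h₍₁₎)π(S(h₍₂₎)g)`. -/
structure IsPartialRep (k : Type*) {H B : Type*} [CommRing k] [Ring H] [HopfAlgebra k H]
    [Ring B] [Algebra k B] (π : H →ₗ[k] B) : Prop where
  pr1 : π 1 = 1
  pr2 : ∀ h kk : H,
    sweedler (LinearMap.mul k B) ((LinearMap.mulLeft k (π h)) ∘ₗ π)
      (π ∘ₗ (HopfAlgebra.antipode k : H →ₗ[k] H)) kk =
    sweedler (LinearMap.mul k B) (π ∘ₗ LinearMap.mulLeft k h)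
      (π ∘ₗ (HopfAlgebra.antipode k : H →ₗ[k] H)) kk
  pr3 : ∀ h g : H,
    sweedler (LinearMap.mul k B) π (π ∘ₗ (HopfAlgebra.antipode k : H →ₗ[k] H)) h * π g =
    sweedler (LinearMap.mul k B) π
      (π ∘ₗ LinearMap.mulRight k g ∘ₗ (HopfAlgebra.antipode k : H →ₗ[k] H)) h


section AuxAll
open Coalgebra HopfAlgebra
section Aux
variable {k H : Type*} [Field k] [Ring H] [HopfAlgebra k H]

local notation "S" => (HopfAlgebra.antipode k : H →ₗ[k] H)

lemma sweedler_repr {B : Type*} [AddCommGroup B] [Module k B]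
    (mul : B →ₗ[k] B →ₗ[k] B) (f g : H →ₗ[k] B) (h : H) {ι : Type*} (r : Coalgebra.Repr k h ι) :
    sweedler mul f g h = ∑ p ∈ r.index, mul (f (r.left p)) (g (r.right p)) := by
  rw [sweedler, LinearMap.comp_apply, show Coalgebra.comul h = _ from r.eq.symm, map_sum]
  simp

lemma tensor_T1 (h : H) {ι : Type*} (r : Coalgebra.Repr k h ι)
    (s : ∀ p : ι, Coalgebra.Repr k (r.left p) (H × H)) :
    ∑ p ∈ r.index, ∑ q ∈ (s p).index,
      (s p).left q ⊗ₜ[k] ((s p).right q * S ((r.right p))) = h ⊗ₜ[k] 1 := by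
  classical
  set t : ∀ p : ι, Coalgebra.Repr k (r.right p) (H × H) := fun p => ℛ k (r.right p) with ht
  have h1 := Coalgebra.sum_tmul_tmul_eq r s t
  have h2 := congrArg (LinearMap.lTensor H (LinearMap.mul' k H ∘ₗ LinearMap.lTensor H S)) h1
  simp only [map_sum, LinearMap.lTensor_tmul, LinearMap.comp_apply, LinearMap.mul'_apply] at h2
  rw [h2]
  have h3 : ∀ p : ι, ∑ q ∈ (t p).index, (t p).left q * S ((t p).right q)
      = Coalgebra.counit (R := k) (r.right p) • 1 := fun p => sum_mul_antipode_eq_smul (t p)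
  calc ∑ p ∈ r.index, ∑ q ∈ (t p).index,
        r.left p ⊗ₜ[k] ((t p).left q * S ((t p).right q))
      = ∑ p ∈ r.index, r.left p ⊗ₜ[k] (Coalgebra.counit (R := k) (r.right p) • 1) := by
        refine Finset.sum_congr rfl fun p _ => ?_
        rw [← TensorProduct.tmul_sum, h3 p]
    _ = (∑ p ∈ r.index, Coalgebra.counit (R := k) (r.right p) • r.left p) ⊗ₜ[k] 1 := by
        rw [TensorProduct.sum_tmul]
        refine Finset.sum_congr rfl fun p _ => ?_
        rw [TensorProduct.tmul_smul, TensorProduct.smul_tmul']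
    _ = h ⊗ₜ[k] 1 := by
        have h4 := congrArg (TensorProduct.rid k H) (Coalgebra.sum_tmul_counit_eq r)
        simp only [map_sum, TensorProduct.rid_tmul, one_smul] at h4
        rw [h4]

variable {A : Type*} [AddCommGroup A] [Module k A]
variable {mulA : A →ₗ[k] A →ₗ[k] A} {oneA : A} {act : H →ₗ[k] A →ₗ[k] A}
variable (hact : IsLeftPartialActionOn k mulA oneA act)

include hact

/-- E1 : `Σ h₁·(S h₂ · b) = (h·1)·b`. -/
lemma pa_E1 (h : H) {ι : Type*} (r : Coalgebra.Repr k h ι) (b : A) :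
    ∑ p ∈ r.index, act (r.left p) (act (S (r.right p)) b)
      = mulA (act h oneA) b := by
  classical
  set s : ∀ p : ι, Coalgebra.Repr k (r.left p) (H × H) := fun p => ℛ k (r.left p) with hs
  have step1 : ∀ p : ι,
      act (r.left p) (act (S (r.right p)) b)
        = ∑ q ∈ (s p).index,
            mulA (act ((s p).left q) oneA)
              (act ((s p).right q * S (r.right p)) b) := by
    intro p
    rw [hact.lpa3 (r.left p) (S (r.right p)) b, sweedler_repr _ _ _ _ (s p)]
    simp
  rw [Finset.sum_congr rfl fun p _ => step1 p]
  have Φ : H →ₗ[k] H →ₗ[k] A := (mulA ∘ₗ act.flip oneA).compl₂ (act.flip b)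
  have hT := congrArg (TensorProduct.lift ((mulA ∘ₗ act.flip oneA).compl₂ (act.flip b)))
    (tensor_T1 h r s)
  simp only [map_sum, TensorProduct.lift.tmul, LinearMap.compl₂_apply, LinearMap.comp_apply,
    LinearMap.flip_apply] at hT
  rw [hT, hact.lpa1]

/-- E2 : `Σ h₁·((S h₂ * g) · a) = (h·1)·(g·a)`. -/
lemma pa_E2 (h g : H) {ι : Type*} (r : Coalgebra.Repr k h ι) (a : A) :
    ∑ p ∈ r.index, act (r.left p) (act (S (r.right p) * g) a)
      = mulA (act h oneA) (act g a) := by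
  classical
  set s : ∀ p : ι, Coalgebra.Repr k (r.left p) (H × H) := fun p => ℛ k (r.left p) with hs
  have step1 : ∀ p : ι,
      act (r.left p) (act (S (r.right p) * g) a)
        = ∑ q ∈ (s p).index,
            mulA (act ((s p).left q) oneA)
              (act (((s p).right q * S (r.right p)) * g) a) := by
    intro p
    rw [hact.lpa3 (r.left p) (S (r.right p) * g) a, sweedler_repr _ _ _ _ (s p)]
    simp [mul_assoc]
  rw [Finset.sum_congr rfl fun p _ => step1 p]
  have hT := congrArg
    (TensorProduct.lift ((mulA ∘ₗ act.flip oneA).compl₂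
      ((act.flip a) ∘ₗ LinearMap.mulRight k g)))
    (tensor_T1 h r s)
  simp only [map_sum, TensorProduct.lift.tmul, LinearMap.compl₂_apply, LinearMap.comp_apply,
    LinearMap.flip_apply, LinearMap.mulRight_apply] at hT
  rw [hT, one_mul]

lemma pa_main3 (h g : H) {ι : Type*} (r : Coalgebra.Repr k h ι) (a : A) :
    ∑ p ∈ r.index, act (r.left p) (act (S (r.right p)) (act g a))
      = ∑ p ∈ r.index, act (r.left p) (act (S (r.right p) * g) a) := by
  rw [pa_E1 hact h r (act g a), pa_E2 hact h g r a]

lemma pa_main2 (hassoc : ∀ a b c : A, mulA (mulA a b) c = mulA a (mulA b c))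
    (honemul : ∀ a : A, mulA oneA a = a)
    (h kk : H) {ι : Type*} (rk : Coalgebra.Repr k kk ι) (a : A) :
    ∑ p ∈ rk.index, act h (act (rk.left p) (act (S (rk.right p)) a))
      = ∑ p ∈ rk.index, act (h * rk.left p) (act (S (rk.right p)) a) := by
  classical
  set rh : Coalgebra.Repr k h (H × H) := ℛ k h with hrh
  set s : ∀ i : H × H, Coalgebra.Repr k (rh.left i) (H × H) := fun i => ℛ k (rh.left i) with hs
  set t : ∀ i : H × H, Coalgebra.Repr k (rh.right i) (H × H) := fun i => ℛ k (rh.right i) with hts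
  set sk : ∀ p : ι, Coalgebra.Repr k (rk.left p) (H × H) := fun p => ℛ k (rk.left p) with hsk
  -- common value
  have key : ∑ p ∈ rk.index, act h (act (rk.left p) (act (S (rk.right p)) a))
      = ∑ i ∈ rh.index, mulA (act (rh.left i * kk) oneA) (act (rh.right i) a) := by
    rw [← map_sum, pa_E1 hact kk rk a, hact.lpa2, sweedler_repr _ _ _ _ rh]
    simp only [LinearMap.flip_apply]
    have l3 : ∀ i : H × H, act (rh.left i) (act kk oneA)
        = ∑ j ∈ (s i).index,
            mulA (act ((s i).left j * kk) oneA) (act ((s i).right j) oneA) := by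
      intro i
      rw [hact.lpa3' (rh.left i) kk oneA, sweedler_repr _ _ _ _ (s i)]
      simp
    calc ∑ i ∈ rh.index, mulA (act (rh.left i) (act kk oneA)) (act (rh.right i) a)
        = ∑ i ∈ rh.index, ∑ j ∈ (s i).index,
            mulA (act ((s i).left j * kk) oneA)
              (mulA (act ((s i).right j) oneA) (act (rh.right i) a)) := by
          refine Finset.sum_congr rfl fun i _ => ?_
          rw [l3 i, map_sum, LinearMap.sum_apply]
          exact Finset.sum_congr rfl fun j _ => hassoc _ _ _
      _ = ∑ i ∈ rh.index, ∑ j ∈ (t i).index,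
            mulA (act (rh.left i * kk) oneA)
              (mulA (act ((t i).left j) oneA) (act ((t i).right j) a)) := by
          have h1 := Coalgebra.sum_tmul_tmul_eq rh s t
          have h2 := congrArg (TensorProduct.lift
            ((mulA ∘ₗ act.flip oneA ∘ₗ LinearMap.mulRight k kk).compl₂
              (TensorProduct.lift ((mulA ∘ₗ act.flip oneA).compl₂ (act.flip a))))) h1
          simpa only [map_sum, TensorProduct.lift.tmul, LinearMap.compl₂_apply,
            LinearMap.comp_apply, LinearMap.flip_apply, LinearMap.mulRight_apply] using h2
      _ = ∑ i ∈ rh.index, mulA (act (rh.left i * kk) oneA) (act (rh.right i) a) := by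
          refine Finset.sum_congr rfl fun i _ => ?_
          rw [← map_sum]
          congr 1
          have h5 := hact.lpa2 (rh.right i) oneA a
          rw [sweedler_repr _ _ _ _ (t i)] at h5
          simp only [LinearMap.flip_apply] at h5
          rw [← h5, honemul]
  rw [key]
  -- now the right-hand side
  have hc : ∀ p : ι, Coalgebra.comul (R := k) (h * rk.left p)
      = ∑ i ∈ rh.index, ∑ q ∈ (sk p).index,
          (rh.left i * (sk p).left q) ⊗ₜ[k] (rh.right i * (sk p).right q) := by
    intro p
    rw [Bialgebra.comul_mul, show Coalgebra.comul (R := k) h = _ from rh.eq.symm,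
      show Coalgebra.comul (R := k) (rk.left p) = _ from (sk p).eq.symm,
      Finset.sum_mul_sum]
    simp [Algebra.TensorProduct.tmul_mul_tmul]
  have rhs1 : ∀ p : ι,
      act (h * rk.left p) (act (S (rk.right p)) a)
        = ∑ i ∈ rh.index, ∑ q ∈ (sk p).index,
            mulA (act (rh.left i * (sk p).left q) oneA)
              (act (rh.right i * ((sk p).right q * S (rk.right p))) a) := by
    intro p
    rw [hact.lpa3 (h * rk.left p) (S (rk.right p)) a, sweedler, LinearMap.comp_apply, hc p]
    simp [mul_assoc]
  rw [Finset.sum_congr rfl fun p _ => rhs1 p, Finset.sum_comm]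
  refine Finset.sum_congr rfl fun i _ => ?_
  have hT := congrArg (TensorProduct.lift
    ((mulA ∘ₗ act.flip oneA ∘ₗ LinearMap.mulLeft k (rh.left i)).compl₂
      ((act.flip a) ∘ₗ LinearMap.mulLeft k (rh.right i))))
    (tensor_T1 kk rk sk)
  simp only [map_sum, TensorProduct.lift.tmul, LinearMap.compl₂_apply, LinearMap.comp_apply,
    LinearMap.flip_apply, LinearMap.mulLeft_apply] at hT
  rw [hT, mul_one]

end Aux

section GMALemmas
variable {k : Type*} [Field k] {n : ℕ}
variable {M : Fin n → Fin n → Type*} [∀ i j, AddCommGroup (M i j)] [∀ i j, Module k (M i j)]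
variable {θ : ∀ i j l : Fin n, M i j →ₗ[k] M j l →ₗ[k] M i l}
variable {e : ∀ i, M i i}

lemma gmaOne_apply_diag (i : Fin n) : gmaOne M e (i, i) = e i := by
  classical
  rw [gmaOne, Finset.sum_apply]
  rw [Finset.sum_eq_single i (fun b _ hb => ?_) (by simp)]
  · simp
  · exact Pi.single_eq_of_ne (fun h => hb (congrArg Prod.fst h).symm) _

lemma gmaOne_apply_ne {p : Fin n × Fin n} (hp : p.1 ≠ p.2) : gmaOne M e p = 0 := by
  classical
  rw [gmaOne, Finset.sum_apply]
  exact Finset.sum_eq_zero fun b _ => Pi.single_eq_of_ne (fun h => hp (by rw [h])) _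

lemma gma_one_mul (hd : IsGMDatum M θ e) (x : gmaSpace M) :
    gmaMulL M θ (gmaOne M e) x = x := by
  classical
  funext p
  show gmaMul M θ (gmaOne M e) x p = x p
  rw [gmaMul]
  rw [Finset.sum_eq_single p.1 (fun b _ hb => ?_) (by simp)]
  · rw [gmaOne_apply_diag, hd.one_mul]
  · rw [gmaOne_apply_ne (by simpa using fun h => hb h.symm)]
    simp

lemma gma_mul_one (hd : IsGMDatum M θ e) (x : gmaSpace M) :
    gmaMulL M θ x (gmaOne M e) = x := by
  classical
  funext p
  show gmaMul M θ x (gmaOne M e) p = x p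
  rw [gmaMul]
  rw [Finset.sum_eq_single p.2 (fun b _ hb => ?_) (by simp)]
  · rw [gmaOne_apply_diag, hd.mul_one]
  · rw [gmaOne_apply_ne (by simpa using hb)]
    simp

lemma gma_assoc (hd : IsGMDatum M θ e) (x y z : gmaSpace M) :
    gmaMulL M θ (gmaMulL M θ x y) z = gmaMulL M θ x (gmaMulL M θ y z) := by
  classical
  funext p
  show gmaMul M θ (gmaMul M θ x y) z p = gmaMul M θ x (gmaMul M θ y z) p
  simp only [gmaMul, map_sum, LinearMap.sum_apply]
  rw [Finset.sum_comm]
  exact Finset.sum_congr rfl fun l _ => Finset.sum_congr rfl fun m _ => hd.assoc _ _ _ _ _ _ _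

lemma gma_proj_incl (i j : Fin n) (m : M i j) :
    gmaIncl (k := k) M i j m (i, j) = m := by
  simp [gmaIncl]

end GMALemmas

end AuxAll

/-- If a Hopf algebra `H` acts partially on the generalized matrix
algebra `R = (M i j)` leaving each `ι_ij(M i j)` invariant, then for each pair `(i,j)`
the map `π_ij : H → End(M i j)`, `π_ij(h)(m) = ι_ij⁻¹(h ▷ ι_ij(m))`, is a partial
representation of `H`. -/
theorem gma_restriction_isPartialRep
    {k : Type*} [Field k] {n : ℕ}
    (M : Fin n → Fin n → Type*) [∀ i j, AddCommGroup (M i j)] [∀ i j, Module k (M i j)]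
    (θ : ∀ i j l : Fin n, M i j →ₗ[k] M j l →ₗ[k] M i l)
    (e : ∀ i, M i i) (hd : IsGMDatum M θ e)
    {H : Type*} [Ring H] [HopfAlgebra k H]
    (act : H →ₗ[k] gmaSpace M →ₗ[k] gmaSpace M)
    (hact : IsLeftPartialActionOn k (gmaMulL M θ) (gmaOne M e) act)
    (hinv : ∀ (i j : Fin n) (h : H) (m : M i j),
      act h (gmaIncl (k := k) M i j m) ∈ LinearMap.range (gmaIncl (k := k) M i j))
    (i j : Fin n) :
    IsPartialRep k (actRestrict M act i j : H →ₗ[k] Module.End k (M i j)) := by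
  classical
  set π := actRestrict M act i j with hπ
  have hK : ∀ (h : H) (m : M i j),
      gmaIncl (k := k) M i j (π h m) = act h (gmaIncl (k := k) M i j m) := by
    intro h m
    obtain ⟨m', hm⟩ := hinv i j h m
    rw [show π h m = act h (gmaIncl (k := k) M i j m) (i, j) from rfl, ← hm, gma_proj_incl]
  have hassoc := gma_assoc (θ := θ) hd
  have honemul := gma_one_mul (θ := θ) hd
  refine ⟨?_, ?_, ?_⟩
  · ext m
    show act (1 : H) (gmaIncl (k := k) M i j m) (i, j) = m
    rw [hact.lpa1, gma_proj_incl]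
  · intro h kk
    set rk : Coalgebra.Repr k kk (H × H) := Coalgebra.Repr.arbitrary k kk with hrk
    rw [sweedler_repr _ _ _ _ rk, sweedler_repr _ _ _ _ rk]
    ext m
    simp only [LinearMap.sum_apply, Module.End.mul_apply, LinearMap.comp_apply,
      LinearMap.mul_apply', LinearMap.mulLeft_apply]
    have t1 : ∀ p : H × H,
        π h (π (rk.left p) (π (HopfAlgebra.antipode (R := k) (rk.right p)) m))
          = act h (act (rk.left p) (act (HopfAlgebra.antipode (R := k) (rk.right p))
              (gmaIncl (k := k) M i j m))) (i, j) := by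
      intro p
      have h1 : gmaIncl (k := k) M i j (π (rk.left p) (π (HopfAlgebra.antipode (R := k) (rk.right p)) m))
          = act (rk.left p) (act (HopfAlgebra.antipode (R := k) (rk.right p))
              (gmaIncl (k := k) M i j m)) := by
        rw [hK, hK]
      calc π h (π (rk.left p) (π (HopfAlgebra.antipode (R := k) (rk.right p)) m))
          = act h (gmaIncl (k := k) M i j
              (π (rk.left p) (π (HopfAlgebra.antipode (R := k) (rk.right p)) m))) (i, j) := rfl
        _ = _ := by rw [h1]
    have t2 : ∀ p : H × H,
        π (h * rk.left p) (π (HopfAlgebra.antipode (R := k) (rk.right p)) m)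
          = act (h * rk.left p) (act (HopfAlgebra.antipode (R := k) (rk.right p))
              (gmaIncl (k := k) M i j m)) (i, j) := by
      intro p
      calc π (h * rk.left p) (π (HopfAlgebra.antipode (R := k) (rk.right p)) m)
          = act (h * rk.left p) (gmaIncl (k := k) M i j
              (π (HopfAlgebra.antipode (R := k) (rk.right p)) m)) (i, j) := rfl
        _ = _ := by rw [hK]
    rw [Finset.sum_congr rfl fun p _ => t1 p, Finset.sum_congr rfl fun p _ => t2 p]
    have key := congrArg (fun z : gmaSpace M => z (i, j))
      (pa_main2 hact hassoc honemul h kk rk (gmaIncl (k := k) M i j m))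
    simpa only [Finset.sum_apply] using key
  · intro h g
    set rh : Coalgebra.Repr k h (H × H) := Coalgebra.Repr.arbitrary k h with hrh
    rw [sweedler_repr _ _ _ _ rh, sweedler_repr _ _ _ _ rh]
    ext m
    simp only [LinearMap.sum_apply, Module.End.mul_apply, LinearMap.comp_apply,
      LinearMap.mul_apply', LinearMap.mulRight_apply]
    have t1 : ∀ p : H × H,
        π (rh.left p) (π (HopfAlgebra.antipode (R := k) (rh.right p)) (π g m))
          = act (rh.left p) (act (HopfAlgebra.antipode (R := k) (rh.right p))
              (act g (gmaIncl (k := k) M i j m))) (i, j) := by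
      intro p
      have h1 : gmaIncl (k := k) M i j (π (HopfAlgebra.antipode (R := k) (rh.right p)) (π g m))
          = act (HopfAlgebra.antipode (R := k) (rh.right p)) (act g (gmaIncl (k := k) M i j m)) := by
        rw [hK, hK]
      calc π (rh.left p) (π (HopfAlgebra.antipode (R := k) (rh.right p)) (π g m))
          = act (rh.left p) (gmaIncl (k := k) M i j
              (π (HopfAlgebra.antipode (R := k) (rh.right p)) (π g m))) (i, j) := rfl
        _ = _ := by rw [h1]
    have t2 : ∀ p : H × H,
        π (rh.left p) (π (HopfAlgebra.antipode (R := k) (rh.right p) * g) m)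
          = act (rh.left p) (act (HopfAlgebra.antipode (R := k) (rh.right p) * g)
              (gmaIncl (k := k) M i j m)) (i, j) := by
      intro p
      calc π (rh.left p) (π (HopfAlgebra.antipode (R := k) (rh.right p) * g) m)
          = act (rh.left p) (gmaIncl (k := k) M i j
              (π (HopfAlgebra.antipode (R := k) (rh.right p) * g) m)) (i, j) := rfl
        _ = _ := by rw [hK]
    rw [Finset.sum_congr rfl fun p _ => t1 p, Finset.sum_congr rfl fun p _ => t2 p]
    have key := congrArg (fun z : gmaSpace M => z (i, j))
      (pa_main3 hact h g rh (gmaIncl (k := k) M i j m))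
    simpa only [Finset.sum_apply] using key
end

section
/- Let H be a Hopf algebra and R = (iMj) a generalized matrix algebra with a symmetric left partial action ▷ of H leaving each ι_ij(iMj) invariant. Then, with the induced partial action ⇀_i of H on R_i and induced left partial smash product action (r#h)·m = r·ι_ij⁻¹(h_(1) ▷ ι_ij((h_(2)·1)·m)) (i.e. via the covariant pair (ψ_ij, π_ij)), one has the multiplicativity identity (1_i#h)·(mn) = ((1_i#h_(1))·m)((1_j#h_(2))·n) for all h ∈ H, m ∈ iMj, n ∈ jMk. -/
open TensorProduct

section Aux

variable {k : Type*} [Field k] {n : ℕ}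
variable (M : Fin n → Fin n → Type*) [∀ i j, AddCommGroup (M i j)] [∀ i j, Module k (M i j)]
variable (θ : ∀ i j l : Fin n, M i j →ₗ[k] M j l →ₗ[k] M i l)

lemma gmaIncl_mul (i j l : Fin n) (x : M i j) (y : M j l) :
    gmaMulL M θ (gmaIncl (k := k) M i j x) (gmaIncl (k := k) M j l y) =
      gmaIncl (k := k) M i l (θ i j l x y) := by
  funext p
  simp only [gmaMulL, LinearMap.mk₂_apply, gmaMul, gmaIncl, LinearMap.single_apply]
  rcases p with ⟨a, b⟩
  by_cases ha : a = i
  · subst ha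
    by_cases hb : b = l
    · subst hb
      rw [Finset.sum_eq_single j]
      · simp [Pi.single_apply]
      · intro c _ hc
        have : Pi.single (M := fun p : Fin n × Fin n => M p.1 p.2) (a, j) x (a, c) = 0 := by
          rw [Pi.single_eq_of_ne]; simp [hc]
        simp [this]
      · simp
    · have h2 : Pi.single (M := fun p : Fin n × Fin n => M p.1 p.2) (a, l)
          (θ a j l x y) (a, b) = 0 := by
        rw [Pi.single_eq_of_ne]; simp [hb]
      rw [h2]
      apply Finset.sum_eq_zero
      intro c _
      have : Pi.single (M := fun p : Fin n × Fin n => M p.1 p.2) (j, l) y (c, b) = 0 := by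
        rw [Pi.single_eq_of_ne]; simp [hb]
      simp [this]
  · have h2 : Pi.single (M := fun p : Fin n × Fin n => M p.1 p.2) (i, l)
        (θ i j l x y) (a, b) = 0 := by
      rw [Pi.single_eq_of_ne]; simp [ha]
    rw [h2]
    apply Finset.sum_eq_zero
    intro c _
    have : Pi.single (M := fun p : Fin n × Fin n => M p.1 p.2) (i, j) x (a, c) = 0 := by
      rw [Pi.single_eq_of_ne]; simp [ha]
    simp [this]

variable {H : Type*} [Ring H] [HopfAlgebra k H]

lemma act_incl_eq (act : H →ₗ[k] gmaSpace M →ₗ[k] gmaSpace M)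
    (hinv : ∀ (i j : Fin n) (h : H) (m : M i j),
      act h (gmaIncl (k := k) M i j m) ∈ LinearMap.range (gmaIncl (k := k) M i j))
    (i j : Fin n) (h : H) (m : M i j) :
    act h (gmaIncl (k := k) M i j m) =
      gmaIncl (k := k) M i j (actRestrict M act i j h m) := by
  obtain ⟨y, hy⟩ := hinv i j h m
  have hy' : actRestrict M act i j h m = y := by
    simp only [actRestrict, LinearMap.coe_mk, AddHom.coe_mk, LinearMap.coe_comp,
      Function.comp_apply, LinearMap.proj_apply]
    rw [← hy]
    simp [gmaIncl, LinearMap.single_apply]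
  rw [hy', hy]

end Aux

/-- With the notation of Theorem 3.4: for a partial action of `H` on
the generalized matrix algebra `R = (M i j)` leaving each `ι_ij(M i j)` invariant, the
induced partial-smash-product module structures satisfy the multiplicativity identity
`(1_i#h)·(mn) = ((1_i#h₍₁₎)·m)((1_j#h₍₂₎)·n)`, i.e.
`π_il(h)(mn) = Σ π_ij(h₍₁₎)(m) · π_jl(h₍₂₎)(n)` for `m ∈ M i j`, `n ∈ M j l`
(the action of `1_i#h` via the covariant pair `(ψ_ij, π_ij)` being `ψ_ij(1_i)π_ij(h) = π_ij(h)`). -/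

theorem gma_smash_action_multiplicative
    {k : Type*} [Field k] {n : ℕ}
    (M : Fin n → Fin n → Type*) [∀ i j, AddCommGroup (M i j)] [∀ i j, Module k (M i j)]
    (θ : ∀ i j l : Fin n, M i j →ₗ[k] M j l →ₗ[k] M i l)
    (e : ∀ i, M i i) (hd : IsGMDatum M θ e)
    {H : Type*} [Ring H] [HopfAlgebra k H]
    (act : H →ₗ[k] gmaSpace M →ₗ[k] gmaSpace M)
    (hact : IsLeftPartialActionOn k (gmaMulL M θ) (gmaOne M e) act)
    (hinv : ∀ (i j : Fin n) (h : H) (m : M i j),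
      act h (gmaIncl (k := k) M i j m) ∈ LinearMap.range (gmaIncl (k := k) M i j))
    (i j l : Fin n) (h : H) (m : M i j) (nn : M j l) :
    actRestrict M act i l h (θ i j l m nn) =
      TensorProduct.lift
        (((θ i j l ∘ₗ ((actRestrict M act i j).flip m)).compl₂
            ((actRestrict M act j l).flip nn)))
        (Coalgebra.comul (R := k) h) := by
  have key := hact.lpa2 h (gmaIncl (k := k) M i j m) (gmaIncl (k := k) M j l nn)
  rw [gmaIncl_mul] at key
  have hres : actRestrict M act i l h (θ i j l m nn) =
      (act h (gmaIncl (k := k) M i l (θ i j l m nn))) (i, l) := by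
    simp [actRestrict]
  rw [hres, key]
  have : (LinearMap.proj (R := k) (φ := fun p : Fin n × Fin n => M p.1 p.2) (i, l)) ∘ₗ
      TensorProduct.lift (((gmaMulL M θ) ∘ₗ
        (act.flip (gmaIncl (k := k) M i j m))).compl₂
        (act.flip (gmaIncl (k := k) M j l nn))) =
      TensorProduct.lift
        (((θ i j l ∘ₗ ((actRestrict M act i j).flip m)).compl₂
            ((actRestrict M act j l).flip nn))) := by
    apply TensorProduct.ext'
    intro h1 h2
    simp only [LinearMap.coe_comp, Function.comp_apply, TensorProduct.lift.tmul,
      LinearMap.compl₂_apply, LinearMap.flip_apply, LinearMap.proj_apply]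
    rw [act_incl_eq M act hinv i j h1 m, act_incl_eq M act hinv j l h2 nn,
      gmaIncl_mul]
    simp [gmaIncl, LinearMap.single_apply]
  have := congrArg (fun f => f (Coalgebra.comul (R := k) h)) this
  simpa [sweedler] using this
end
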